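/- If g : ℝ → ℂ is a Schwartz function, then for any p ≥ 0 there exists a constant C > 0 such that for every natural number n ≥ 1, ∫_{-n/2}^{n/2} |ξ|^p |F_n(g)(ξ)|² dξ ≤ C, where F_n(g) is the discrete Fourier transform of g. -/

import Mathlib

open MeasureTheory Real Filter FourierTransform
open scoped ComplexConjugate

noncomputable section

/-- The discrete Fourier transform of an integrable function. -/
noncomputable def discreteFourier (g : ℝ → ℂ) (n : ℕ) (ξ : ℝ) : ℂ :=
  (1 / (n : ℂ)) * ∑' x : ℤ, g ((x : ℝ) / n) *
    Complex.exp (2 * (π : ℂ) * Complex.I * (x : ℂ) * (ξ : ℂ) / (n : ℂ))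

lemma fourier_scale (g : SchwartzMap ℝ ℂ) (n : ℕ) (hn : 1 ≤ n) (ξ : ℝ) (w : ℝ) :
    𝓕 (fun t : ℝ => (1/(n:ℂ)) * (g (t/n) *
        Complex.exp (2 * (π:ℂ) * Complex.I * (t:ℂ) * (ξ:ℂ) / (n:ℂ)))) w
      = 𝓕 (⇑g) ((n:ℝ) * w - ξ) := by
  have hn0 : (n:ℝ) ≠ 0 := by positivity
  have hnpos : (0:ℝ) < n := by exact_mod_cast hn
  have hnC : (n:ℂ) ≠ 0 := by exact_mod_cast Nat.cast_ne_zero.2 (by omega)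
  rw [Real.fourier_real_eq_integral_exp_smul,
    Real.fourier_real_eq_integral_exp_smul]
  have key : ∀ v : ℝ,
      Complex.exp (↑(-2 * π * v * w) * Complex.I) •
        ((1/(n:ℂ)) * (g (v/n) *
          Complex.exp (2 * (π:ℂ) * Complex.I * (v:ℂ) * (ξ:ℂ) / (n:ℂ))))
      = (1/(n:ℂ)) * ((fun s : ℝ => g s *
          Complex.exp (↑(-2 * π * s * ((n:ℝ) * w - ξ)) * Complex.I)) ((n:ℝ)⁻¹ * v)) := by
    intro v
    simp only [smul_eq_mul]
    have hdiv : (n:ℝ)⁻¹ * v = v / n := by ring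
    rw [hdiv]
    rw [show Complex.exp (↑(-2 * π * (v/(n:ℝ)) * ((n:ℝ) * w - ξ)) * Complex.I)
        = Complex.exp (↑(-2 * π * v * w) * Complex.I) *
          Complex.exp (2 * (π:ℂ) * Complex.I * (v:ℂ) * (ξ:ℂ) / (n:ℂ)) by
      rw [← Complex.exp_add]
      congr 1
      push_cast
      field_simp
      ring]
    ring
  simp only [key]
  rw [MeasureTheory.integral_const_mul]
  rw [MeasureTheory.Measure.integral_comp_inv_mul_left
    (fun s : ℝ => g s * Complex.exp (↑(-2 * π * s * ((n:ℝ) * w - ξ)) * Complex.I)) (n:ℝ)]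
  rw [abs_of_pos hnpos]
  rw [Complex.real_smul]
  push_cast
  rw [← mul_assoc, one_div, inv_mul_cancel₀ hnC, one_mul]
  simp only [smul_eq_mul]
  exact integral_congr_ae (Filter.Eventually.of_forall fun v => mul_comm _ _)

lemma discreteFourier_eq_tsum (g : SchwartzMap ℝ ℂ) (n : ℕ) (hn : 1 ≤ n) (ξ : ℝ) :
    discreteFourier (fun u => g u) n ξ = ∑' m : ℤ, 𝓕 (⇑g) ((m:ℝ) * n - ξ) := by
  have hn0 : (n:ℝ) ≠ 0 := by positivity
  have hnpos : (0:ℝ) < n := by exact_mod_cast hn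
  have hn1 : (1:ℝ) ≤ n := by exact_mod_cast hn
  set f : ℝ → ℂ := fun t : ℝ => (1/(n:ℂ)) * (g (t/n) *
      Complex.exp (2 * (π:ℂ) * Complex.I * (t:ℂ) * (ξ:ℂ) / (n:ℂ))) with hfdef
  have hF : ∀ w : ℝ, 𝓕 f w = 𝓕 (⇑g) ((n:ℝ) * w - ξ) := fourier_scale g n hn ξ
  have hc : Continuous f := by
    apply continuous_const.mul
    apply (g.continuous.comp (continuous_id.div_const _)).mul
    exact Complex.continuous_exp.comp (by fun_prop)
  have hf : f =O[cocompact ℝ] (|·| ^ (-2:ℝ)) := by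
    obtain ⟨C, hCpos, hC⟩ := g.decay 2 0
    simp only [norm_iteratedFDeriv_zero] at hC
    apply Asymptotics.IsBigO.of_bound (C * n^2)
    have hmem : {(0:ℝ)}ᶜ ∈ cocompact ℝ :=
      Filter.mem_cocompact.2 ⟨{0}, isCompact_singleton, le_rfl⟩
    filter_upwards [hmem] with t ht
    have ht0 : t ≠ 0 := ht
    have habs : |t| > 0 := abs_pos.2 ht0
    have hrpow : ‖|t| ^ (-2:ℝ)‖ = (t^2)⁻¹ := by
      rw [Real.norm_eq_abs, abs_of_nonneg (Real.rpow_nonneg (abs_nonneg t) _)]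
      rw [show (-2:ℝ) = -(2:ℕ) by norm_num, Real.rpow_neg (abs_nonneg t),
        Real.rpow_natCast, sq_abs]
    have h1 : ‖f t‖ = (1/(n:ℝ)) * ‖g (t/n)‖ := by
      rw [hfdef]
      simp only [norm_mul]
      rw [show (2 * (π:ℂ) * Complex.I * (t:ℂ) * (ξ:ℂ) / (n:ℂ))
          = ((2 * π * t * ξ / n : ℝ) : ℂ) * Complex.I by push_cast; ring]
      rw [Complex.norm_exp_ofReal_mul_I]
      simp [abs_of_pos hnpos]
    have ht2 : (0:ℝ) < t^2 := by positivity
    have hn2 : (0:ℝ) < (n:ℝ)^2 := by positivity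
    have h2 : t^2 * ‖g (t/n)‖ ≤ C * n^2 := by
      have h := hC (t/n)
      rw [Real.norm_eq_abs, sq_abs, div_pow, div_mul_eq_mul_div,
        div_le_iff₀ hn2] at h
      linarith
    rw [h1, hrpow]
    have hone : 1/(n:ℝ) ≤ 1 := by
      rw [div_le_one hnpos]; exact hn1
    have hg : ‖g (t/n)‖ ≤ C * n^2 / t^2 := by
      rw [le_div_iff₀ ht2]; linarith
    calc (1/(n:ℝ)) * ‖g (t/n)‖ ≤ ‖g (t/n)‖ := by
          nlinarith [norm_nonneg (g (t/n)), hone, hnpos]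
      _ ≤ C * n^2 / t^2 := hg
      _ = C * n^2 * (t^2)⁻¹ := by ring
  have hFf : (𝓕 f) =O[cocompact ℝ] (|·| ^ (-2:ℝ)) := by
    rw [show 𝓕 f = fun w => 𝓕 (⇑g) ((n:ℝ) * w - ξ) from funext hF]
    obtain ⟨C₂, hC₂pos, hC₂⟩ := (SchwartzMap.fourierTransformCLM ℝ g).decay 2 0
    simp only [norm_iteratedFDeriv_zero, SchwartzMap.fourierTransformCLM_apply, SchwartzMap.fourier_coe] at hC₂
    apply Asymptotics.IsBigO.of_bound (4*C₂)
    have key : ∀ w : ℝ, 2*(1+|ξ|) ≤ |w| →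
        ‖𝓕 (⇑g) ((n:ℝ)*w - ξ)‖ ≤ 4*C₂ * ‖|w| ^ (-2:ℝ)‖ := by
      intro w hw
      have hwpos : (0:ℝ) < |w| := by
        have : (0:ℝ) ≤ |ξ| := abs_nonneg _
        linarith
      have hrpow : ‖|w| ^ (-2:ℝ)‖ = (w^2)⁻¹ := by
        rw [Real.norm_eq_abs, abs_of_nonneg (Real.rpow_nonneg (abs_nonneg w) _)]
        rw [show (-2:ℝ) = -(2:ℕ) by norm_num, Real.rpow_neg (abs_nonneg w),
          Real.rpow_natCast, sq_abs]
      have hbig : |w|/2 ≤ |(n:ℝ)*w - ξ| := by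
        have h1 : |(n:ℝ)*w| - |ξ| ≤ |(n:ℝ)*w - ξ| := abs_sub_abs_le_abs_sub _ _
        have h2 : |w| ≤ |(n:ℝ)*w| := by
          rw [abs_mul, abs_of_pos hnpos]
          nlinarith [abs_nonneg w]
        have h3 : |ξ| ≤ |w|/2 - 1 := by linarith
        linarith
      have := hC₂ ((n:ℝ)*w - ξ)
      rw [Real.norm_eq_abs, sq_abs] at this
      rw [hrpow]
      have hsq : (|w|/2)^2 ≤ ((n:ℝ)*w - ξ)^2 := by
        have habs2 : |(n:ℝ)*w - ξ|^2 = ((n:ℝ)*w - ξ)^2 := sq_abs _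
        nlinarith [hbig, abs_nonneg ((n:ℝ)*w - ξ), abs_nonneg w]
      have hw2 : (0:ℝ) < w^2 := by rw [← sq_abs]; exact pow_pos hwpos 2
      have h4 : w^2/4 ≤ ((n:ℝ)*w - ξ)^2 := by
        rw [div_pow, sq_abs] at hsq; linarith
      have hnn : 0 ≤ ‖𝓕 (⇑g) ((n:ℝ)*w - ξ)‖ := norm_nonneg _
      rw [show 4*C₂*(w^2)⁻¹ = (4*C₂)/w^2 by ring, le_div_iff₀ hw2]
      nlinarith [this, h4, hnn]
    rw [cocompact_eq_atBot_atTop, Filter.eventually_sup]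
    constructor
    · filter_upwards [Filter.eventually_le_atBot (-(2*(1+|ξ|)))] with w hw
      refine key w ?_
      rw [show |w| = -w from abs_of_nonpos (by linarith [abs_nonneg ξ])]
      linarith
    · filter_upwards [Filter.eventually_ge_atTop (2*(1+|ξ|))] with w hw
      refine key w ?_
      rw [show |w| = w from abs_of_nonneg (by linarith [abs_nonneg ξ])]
      linarith
  have hpoisson := Real.tsum_eq_tsum_fourier_of_rpow_decay hc one_lt_two hf hFf 0
  simp only [zero_add] at hpoisson
  have h0 : (((0:ℝ)) : UnitAddCircle) = 0 := rfl
  have hR : ∑' m : ℤ, 𝓕 f (m:ℝ) * fourier m (((0:ℝ)) : UnitAddCircle)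
      = ∑' m : ℤ, 𝓕 (⇑g) ((m:ℝ)*n - ξ) := by
    refine tsum_congr fun m => ?_
    rw [hF, h0, fourier_eval_zero, mul_one, mul_comm ((n:ℝ)) ((m:ℝ))]
  calc discreteFourier (fun u => g u) n ξ
      = ∑' x : ℤ, f (x:ℝ) := by
        simp only [discreteFourier, ← tsum_mul_left, hfdef]
        refine tsum_congr fun x => ?_
        norm_cast
    _ = ∑' m : ℤ, 𝓕 f (m:ℝ) * fourier m (((0:ℝ)) : UnitAddCircle) := hpoisson
    _ = ∑' m : ℤ, 𝓕 (⇑g) ((m:ℝ)*n - ξ) := hR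

lemma discreteFourier_bound (g : SchwartzMap ℝ ℂ) (k : ℕ) (hk : 2 ≤ k) :
    ∃ D : ℝ, 0 ≤ D ∧ ∀ n : ℕ, 1 ≤ n → ∀ ξ : ℝ, |ξ| ≤ (n:ℝ)/2 →
      ‖discreteFourier (fun u => g u) n ξ‖ ≤ D * ((1+|ξ|)^k)⁻¹ := by
  obtain ⟨C₀, hC₀pos, hC₀⟩ := (SchwartzMap.fourierTransformCLM ℝ g).decay (2*k) 0
  obtain ⟨C₁, hC₁pos, hC₁⟩ := (SchwartzMap.fourierTransformCLM ℝ g).decay 0 0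
  simp only [norm_iteratedFDeriv_zero, SchwartzMap.fourierTransformCLM_apply, SchwartzMap.fourier_coe,
    pow_zero, one_mul, Real.norm_eq_abs] at hC₀ hC₁
  set A : ℝ := C₀ + C₁ with hA
  have hApos : 0 < A := by positivity
  have hdecay : ∀ u : ℝ, (1+|u|)^(2*k) * ‖𝓕 (⇑g) u‖ ≤ 2^(2*k) * A := by
    intro u
    have h1 : (1+|u|)^(2*k) ≤ 2^(2*k) * (1 + |u|^(2*k)) := by
      calc (1+|u|)^(2*k) ≤ (2*max 1 |u|)^(2*k) := by
            apply pow_le_pow_left₀ (by positivity)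
            rcases le_total |u| 1 with h|h
            · rw [max_eq_left h]; linarith
            · rw [max_eq_right h]; linarith
        _ = 2^(2*k) * (max 1 |u|)^(2*k) := by rw [mul_pow]
        _ ≤ 2^(2*k) * (1 + |u|^(2*k)) := by
            apply mul_le_mul_of_nonneg_left _ (by positivity)
            rcases le_total |u| 1 with h|h
            · rw [max_eq_left h, one_pow]
              nlinarith [pow_nonneg (abs_nonneg u) (2*k)]
            · rw [max_eq_right h]
              nlinarith [pow_nonneg (abs_nonneg u) (2*k)]
    have e1 : (1+|u|)^(2*k) * ‖𝓕 (⇑g) u‖ ≤ 2^(2*k) * (1+|u|^(2*k)) * ‖𝓕 (⇑g) u‖ :=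
      mul_le_mul_of_nonneg_right h1 (norm_nonneg _)
    have e2 : ‖𝓕 (⇑g) u‖ + |u|^(2*k) * ‖𝓕 (⇑g) u‖ ≤ A := by
      have := hC₀ u; have := hC₁ u; rw [hA]; linarith
    have e3 : (2:ℝ)^(2*k) * (1+|u|^(2*k)) * ‖𝓕 (⇑g) u‖
        = 2^(2*k) * (‖𝓕 (⇑g) u‖ + |u|^(2*k) * ‖𝓕 (⇑g) u‖) := by ring
    rw [e3] at e1
    calc (1+|u|)^(2*k) * ‖𝓕 (⇑g) u‖
        ≤ 2^(2*k) * (‖𝓕 (⇑g) u‖ + |u|^(2*k) * ‖𝓕 (⇑g) u‖) := e1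
      _ ≤ 2^(2*k) * A := mul_le_mul_of_nonneg_left e2 (by positivity)
  have hsum1 : Summable (fun m : ℤ => ((1+|(m:ℝ)|)^k)⁻¹) := by
    have hk1 : 1 < k := lt_of_lt_of_le one_lt_two hk
    apply summable_of_isBigO (summable_one_div_int_pow.2 hk1)
    apply Asymptotics.IsBigO.of_bound 1
    rw [Filter.eventually_cofinite]
    apply Set.Finite.subset (Set.finite_singleton (0:ℤ))
    intro m hm
    simp only [Set.mem_setOf_eq, not_le] at hm
    simp only [Set.mem_singleton_iff]
    by_contra h0
    have h1m : (1:ℝ) ≤ |(m:ℝ)| := by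
      rw [show |(m:ℝ)| = ((|m| : ℤ) : ℝ) by push_cast; ring]
      exact_mod_cast Int.one_le_abs (by exact_mod_cast h0)
    have hle : ((1+|(m:ℝ)|)^k)⁻¹ ≤ (|(m:ℝ)|^k)⁻¹ := by
      apply inv_anti₀ (by positivity)
      exact pow_le_pow_left₀ (abs_nonneg _) (by linarith) k
    apply absurd hm
    push_neg
    rw [Real.norm_eq_abs, Real.norm_eq_abs, one_mul,
      abs_of_nonneg (by positivity : (0:ℝ) ≤ ((1+|(m:ℝ)|)^k)⁻¹),
      abs_div, abs_one, abs_pow, one_div]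
    exact hle
  set S : ℝ := ∑' m : ℤ, ((1+|(m:ℝ)|)^k)⁻¹ with hS
  have hSnonneg : 0 ≤ S := tsum_nonneg (fun m => by positivity)
  refine ⟨2^(2*k) * A * 2^k * S, by positivity, ?_⟩
  intro n hn ξ hξ
  have hn1 : (1:ℝ) ≤ n := by exact_mod_cast hn
  rw [discreteFourier_eq_tsum g n hn ξ]
  set B : ℝ := 2^(2*k) * A * 2^k * ((1+|ξ|)^k)⁻¹ with hB
  have hmb : ∀ m : ℤ, ‖𝓕 (⇑g) ((m:ℝ)*n - ξ)‖ ≤ B * ((1+|(m:ℝ)|)^k)⁻¹ := by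
    intro m
    set u : ℝ := (m:ℝ)*n - ξ with hu
    have hkey : ((1+|(m:ℝ)|)/2 * (1+|ξ|))^k ≤ (1+|u|)^(2*k) := by
      rcases eq_or_ne m 0 with rfl | hm0
      · have hu0 : |u| = |ξ| := by rw [hu]; push_cast; rw [zero_mul, zero_sub, abs_neg]
        rw [hu0]
        have h1 : ((1+|((0:ℤ):ℝ)|)/2 * (1+|ξ|)) ≤ (1+|ξ|) := by
          simp only [Int.cast_zero, abs_zero, add_zero]
          nlinarith [abs_nonneg ξ]
        calc ((1+|((0:ℤ):ℝ)|)/2 * (1+|ξ|))^k ≤ (1+|ξ|)^k :=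
              pow_le_pow_left₀ (by positivity) h1 k
          _ ≤ (1+|ξ|)^(2*k) :=
              pow_le_pow_right₀ (by nlinarith [abs_nonneg ξ]) (by omega)
      · have h1m : (1:ℝ) ≤ |(m:ℝ)| := by
          rw [show |(m:ℝ)| = ((|m| : ℤ) : ℝ) by push_cast; ring]
          exact_mod_cast Int.one_le_abs hm0
        have htri : |(m:ℝ)| * (n:ℝ) - |ξ| ≤ |u| := by
          have := abs_sub_abs_le_abs_sub ((m:ℝ)*n) ξ
          rw [abs_mul, abs_of_pos (by linarith : (0:ℝ) < (n:ℝ))] at this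
          linarith
        have a1 : (1+|(m:ℝ)|)/2 ≤ 1+|u| := by nlinarith
        have a2 : 1+|ξ| ≤ 1+|u| := by nlinarith
        calc ((1+|(m:ℝ)|)/2 * (1+|ξ|))^k ≤ ((1+|u|)*(1+|u|))^k := by
              apply pow_le_pow_left₀ (by positivity)
              apply mul_le_mul a1 a2 (by positivity) (by positivity)
          _ = (1+|u|)^(2*k) := by rw [two_mul, pow_add, mul_pow]
    have hpos : (0:ℝ) < ((1+|(m:ℝ)|)/2 * (1+|ξ|))^k := by positivity
    have hd := hdecay u
    have hnorm : ‖𝓕 (⇑g) u‖ ≤ 2^(2*k) * A * (((1+|(m:ℝ)|)/2 * (1+|ξ|))^k)⁻¹ := by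
      have hPv : ((1+|(m:ℝ)|)/2 * (1+|ξ|))^k * ‖𝓕 (⇑g) u‖ ≤ 2^(2*k) * A :=
        le_trans (mul_le_mul_of_nonneg_right hkey (norm_nonneg _)) hd
      rw [show (2:ℝ)^(2*k) * A * (((1+|(m:ℝ)|)/2 * (1+|ξ|))^k)⁻¹
          = (2^(2*k) * A) / ((1+|(m:ℝ)|)/2 * (1+|ξ|))^k from by ring,
        le_div_iff₀ hpos, mul_comm]
      exact hPv
    calc ‖𝓕 (⇑g) u‖ ≤ 2^(2*k) * A * (((1+|(m:ℝ)|)/2 * (1+|ξ|))^k)⁻¹ := hnorm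
      _ = B * ((1+|(m:ℝ)|)^k)⁻¹ := by
          rw [hB, mul_pow, div_pow, mul_inv, inv_div]
          ring
  have hsnorm : Summable (fun m : ℤ => ‖𝓕 (⇑g) ((m:ℝ)*n - ξ)‖) :=
    Summable.of_nonneg_of_le (fun m => norm_nonneg _) hmb (hsum1.mul_left B)
  calc ‖∑' m : ℤ, 𝓕 (⇑g) ((m:ℝ)*n - ξ)‖ ≤ ∑' m : ℤ, ‖𝓕 (⇑g) ((m:ℝ)*n - ξ)‖ :=
        norm_tsum_le_tsum_norm hsnorm
    _ ≤ ∑' m : ℤ, B * ((1+|(m:ℝ)|)^k)⁻¹ := Summable.tsum_le_tsum hmb hsnorm (hsum1.mul_left B)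
    _ = B * S := tsum_mul_left
    _ = 2^(2*k) * A * 2^k * S * ((1+|ξ|)^k)⁻¹ := by rw [hB]; ring

theorem stmt_3 (g : SchwartzMap ℝ ℂ) (p : ℝ) (hp : 0 ≤ p) :
    ∃ C : ℝ, 0 < C ∧ ∀ n : ℕ, 1 ≤ n →
      (∫ ξ in (-(n : ℝ)/2)..((n : ℝ)/2),
        |ξ| ^ p * ‖discreteFourier (fun u => g u) n ξ‖ ^ 2) ≤ C := by
  set k : ℕ := ⌈p⌉₊ + 2 with hkdef
  have hk2 : 2 ≤ k := by omega
  obtain ⟨D, hD, hbound⟩ := discreteFourier_bound g k hk2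
  set r : ℝ := 2*k - p with hr
  have hp_le : p ≤ (⌈p⌉₊ : ℝ) := Nat.le_ceil p
  have hkr : (k:ℝ) = (⌈p⌉₊:ℝ) + 2 := by rw [hkdef]; push_cast; ring
  have hr1 : 1 < r := by rw [hr, hkr]; linarith
  have hint : Integrable (fun ξ : ℝ => D^2 * (1+‖ξ‖)^(-r)) := by
    apply Integrable.const_mul
    apply integrable_one_add_norm (E := ℝ)
    rw [Module.finrank_self]
    exact_mod_cast hr1
  refine ⟨(∫ ξ : ℝ, D^2 * (1+‖ξ‖)^(-r)) + 1, ?_, ?_⟩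
  · have h0 : 0 ≤ ∫ ξ : ℝ, D^2 * (1+‖ξ‖)^(-r) :=
      integral_nonneg (fun ξ => by positivity)
    linarith
  intro n hn
  have hn1 : (1:ℝ) ≤ n := by exact_mod_cast hn
  have hab : -(n:ℝ)/2 ≤ (n:ℝ)/2 := by linarith
  rw [intervalIntegral.integral_of_le hab]
  have hmaj : ∀ ξ ∈ Set.Ioc (-(n:ℝ)/2) ((n:ℝ)/2),
      |ξ| ^ p * ‖discreteFourier (fun u => g u) n ξ‖ ^ 2 ≤ D^2 * (1+‖ξ‖)^(-r) := by
    intro ξ hξ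
    have hξabs : |ξ| ≤ (n:ℝ)/2 := abs_le.2 ⟨by linarith [hξ.1], hξ.2⟩
    have hb := hbound n hn ξ hξabs
    have h1ξ : (0:ℝ) < 1 + |ξ| := by positivity
    have e1 : |ξ| ^ p ≤ (1+|ξ|) ^ p := Real.rpow_le_rpow (abs_nonneg ξ) (by linarith) hp
    have e2 : ‖discreteFourier (fun u => g u) n ξ‖ ^ 2 ≤ (D * ((1+|ξ|)^k)⁻¹)^2 :=
      pow_le_pow_left₀ (norm_nonneg _) hb 2
    have hF2 : (0:ℝ) ≤ ‖discreteFourier (fun u => g u) n ξ‖ ^ 2 := by positivity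
    have step1 : |ξ| ^ p * ‖discreteFourier (fun u => g u) n ξ‖ ^ 2
        ≤ (1+|ξ|) ^ p * (D * ((1+|ξ|)^k)⁻¹)^2 := by
      apply mul_le_mul e1 e2 hF2 (Real.rpow_nonneg h1ξ.le p)
    have step2 : (1+|ξ|) ^ p * (D * ((1+|ξ|)^k)⁻¹)^2 = D^2 * (1+‖ξ‖)^(-r) := by
      rw [Real.norm_eq_abs, mul_pow, inv_pow, ← pow_mul]
      have hnp : ((1+|ξ|)^(k*2) : ℝ) = (1+|ξ|)^((k*2 : ℕ):ℝ) := (Real.rpow_natCast _ _).symm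
      rw [hnp, ← Real.rpow_neg h1ξ.le]
      rw [show (1+|ξ|) ^ p * (D^2 * (1+|ξ|) ^ (-((k*2:ℕ):ℝ)))
          = D^2 * ((1+|ξ|) ^ p * (1+|ξ|) ^ (-((k*2:ℕ):ℝ))) from by ring]
      rw [← Real.rpow_add h1ξ]
      congr 1
      rw [hr]
      push_cast
      ring
    rw [Real.norm_eq_abs] at step2 ⊢
    linarith [step1, le_of_eq step2]
  calc (∫ ξ in Set.Ioc (-(n:ℝ)/2) ((n:ℝ)/2),
          |ξ| ^ p * ‖discreteFourier (fun u => g u) n ξ‖ ^ 2)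
      ≤ ∫ ξ in Set.Ioc (-(n:ℝ)/2) ((n:ℝ)/2), D^2 * (1+‖ξ‖)^(-r) := by
        apply integral_mono_of_nonneg
        · exact Filter.Eventually.of_forall fun ξ => by positivity
        · exact hint.integrableOn
        · exact (ae_restrict_iff' measurableSet_Ioc).2 (Filter.Eventually.of_forall hmaj)
    _ ≤ ∫ ξ : ℝ, D^2 * (1+‖ξ‖)^(-r) :=
        setIntegral_le_integral hint (Filter.Eventually.of_forall fun ξ => by positivity)
    _ ≤ (∫ ξ : ℝ, D^2 * (1+‖ξ‖)^(-r)) + 1 := by linarith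

end
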